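/- Let ε be a real number with 0 < ε < √2 − 1, and let Z be a nonnegative real-valued random variable with finite second moment satisfying σ²[Z] ≤ E[Z]. If E[Z] ≥ 2·pivot(ε), then P(Z < thresh(ε)) ≤ 1/29.67. -/

import Mathlib

open MeasureTheory ProbabilityTheory

/-- `pivot ε = 9.84·(1 + 1/ε)²`. -/
noncomputable def pivot (ε : ℝ) : ℝ := 9.84 * (1 + 1 / ε) ^ 2

/-- `thresh ε = 9.84·(1 + ε/(1+ε))·(1 + 1/ε)²`. -/
noncomputable def thresh (ε : ℝ) : ℝ := 9.84 * (1 + ε / (1 + ε)) * (1 + 1 / ε) ^ 2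

/-- Cantelli's one-sided inequality. -/
lemma cantelli_aux {Ω : Type*} [MeasurableSpace Ω] (μ : Measure Ω) [IsProbabilityMeasure μ]
    (X : Ω → ℝ) (hX : MemLp X 2 μ) {t : ℝ} (ht : 0 < t) :
    (μ {ω | X ω ≤ (∫ x, X x ∂μ) - t}).toReal ≤
      variance X μ / (variance X μ + t ^ 2) := by
  set m := ∫ x, X x ∂μ with hm
  set v := variance X μ with hv
  have hv0 : 0 ≤ v := variance_nonneg X μ
  set lam := v / t with hlam
  have hlam0 : 0 ≤ lam := div_nonneg hv0 ht.le
  have hint1 : Integrable X μ := hX.integrable one_le_two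
  have hint2 : Integrable (fun ω => X ω ^ 2) μ := hX.integrable_sq
  have hW : Integrable (fun ω => (m + lam - X ω) ^ 2) μ := by
    have := ((memLp_const (m + lam)).sub hX).integrable_sq
    simpa using this
  have hEW : ∫ ω, (m + lam - X ω) ^ 2 ∂μ = v + lam ^ 2 := by
    have hvdef : v = (∫ ω, X ω ^ 2 ∂μ) - m ^ 2 := by
      rw [hv, variance_eq_sub hX]
      simp [hm]
    have heq : ∀ ω, (m + lam - X ω) ^ 2
        = X ω ^ 2 - (2 * (m + lam)) * X ω + (m + lam) ^ 2 := by
      intro ω; ring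
    simp_rw [heq]
    have hintB : Integrable (fun ω => 2 * (m + lam) * X ω) μ := hint1.const_mul _
    have hintA : Integrable (fun ω => X ω ^ 2 - 2 * (m + lam) * X ω) μ := hint2.sub hintB
    rw [integral_add hintA (integrable_const _), integral_sub hint2 hintB,
        integral_const_mul, integral_const]
    simp only [measure_univ, ENNReal.toReal_one, probReal_univ, smul_eq_mul, one_mul]
    linear_combination -hvdef
  have hsub : {ω | X ω ≤ m - t} ⊆ {ω | (t + lam) ^ 2 ≤ (m + lam - X ω) ^ 2} := by
    intro ω hω
    simp only [Set.mem_setOf_eq] at hω ⊢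
    nlinarith [ht.le, hlam0]
  have hmarkov := mul_meas_ge_le_integral_of_nonneg
      (f := fun ω => (m + lam - X ω) ^ 2) (μ := μ)
      (Filter.Eventually.of_forall fun ω => sq_nonneg _) hW ((t + lam) ^ 2)
  rw [hEW] at hmarkov
  have hmono : (μ {ω | X ω ≤ m - t}).toReal
      ≤ (μ {ω | (t + lam) ^ 2 ≤ (m + lam - X ω) ^ 2}).toReal :=
    ENNReal.toReal_mono (measure_ne_top μ _) (measure_mono hsub)
  have htl : (0:ℝ) < t + lam := by linarith
  have key : (μ {ω | X ω ≤ m - t}).toReal ≤ (v + lam ^ 2) / (t + lam) ^ 2 := by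
    rw [le_div_iff₀ (by positivity)]
    calc (μ {ω | X ω ≤ m - t}).toReal * (t + lam) ^ 2
        ≤ (μ {ω | (t + lam) ^ 2 ≤ (m + lam - X ω) ^ 2}).toReal * (t + lam) ^ 2 := by
          exact mul_le_mul_of_nonneg_right hmono (by positivity)
      _ = (t + lam) ^ 2 * (μ {ω | (t + lam) ^ 2 ≤ (m + lam - X ω) ^ 2}).toReal := by ring
      _ ≤ v + lam ^ 2 := hmarkov
  have halg : (v + lam ^ 2) / (t + lam) ^ 2 = v / (v + t ^ 2) := by
    have ht' : t ≠ 0 := ht.ne'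
    have hvt : v + t ^ 2 ≠ 0 := by positivity
    rw [hlam]
    field_simp
    ring
  rw [halg] at key
  exact key

set_option maxHeartbeats 1000000 in
theorem stmt_16 {Ω : Type*} [MeasurableSpace Ω] (μ : Measure Ω) [IsProbabilityMeasure μ]
    (ε : ℝ) (hlo : 0 < ε) (hhi : ε < Real.sqrt 2 - 1)
    (Z : Ω → ℝ) (hZnonneg : ∀ ω, 0 ≤ Z ω) (hL2 : MemLp Z 2 μ)
    (hvar : variance Z μ ≤ ∫ x, Z x ∂μ)
    (hE : 2 * pivot ε ≤ ∫ x, Z x ∂μ) :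
    (μ {ω | Z ω < thresh ε}).toReal ≤ 1 / 29.67 := by
  set m := ∫ x, Z x ∂μ with hm
  set v := variance Z μ with hv
  have hv0 : 0 ≤ v := variance_nonneg Z μ
  have hε2 : ε ^ 2 < 19.68 / 114.68 := by
    have hs : Real.sqrt 2 ≤ 1.414214 := by
      nlinarith [Real.sq_sqrt (by norm_num : (0:ℝ) ≤ 2), Real.sqrt_nonneg 2]
    nlinarith
  have h1ε : (0:ℝ) < 1 + ε := by linarith
  have hp : (0:ℝ) < pivot ε := by
    unfold pivot; positivity
  -- thresh in terms of pivot
  have hthresh : thresh ε = pivot ε * (1 + ε / (1 + ε)) := by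
    unfold thresh pivot; ring
  have hδ : ε / (1 + ε) < 1 := by
    rw [div_lt_one h1ε]; linarith
  have hδ0 : 0 ≤ ε / (1 + ε) := by positivity
  have hm2p : 2 * pivot ε ≤ m := hE
  have htlt : thresh ε < m := by
    rw [hthresh]
    nlinarith
  set t := m - thresh ε with htdef
  have ht : 0 < t := sub_pos.mpr htlt
  have hcant := cantelli_aux μ Z hL2 ht
  have hsub : {ω | Z ω < thresh ε} ⊆ {ω | Z ω ≤ m - t} := by
    intro ω hω
    simp only [Set.mem_setOf_eq] at hω ⊢
    have hmt : m - t = thresh ε := by rw [htdef]; ring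
    linarith [hmt]
  have hmono : (μ {ω | Z ω < thresh ε}).toReal ≤ (μ {ω | Z ω ≤ m - t}).toReal :=
    ENNReal.toReal_mono (measure_ne_top μ _) (measure_mono hsub)
  -- v/(v+t²) ≤ m/(m+t²) since v ≤ m
  have hstep : v / (v + t ^ 2) ≤ m / (m + t ^ 2) := by
    have hm0 : 0 < m := lt_of_lt_of_le (by positivity) hm2p
    rw [div_le_div_iff₀ (by positivity) (by positivity)]
    nlinarith [sq_nonneg t, hvar]
  -- final numeric bound : m/(m+t²) ≤ 1/29.67
  have hfin : m / (m + t ^ 2) ≤ 1 / 29.67 := by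
    have hm0 : 0 < m := lt_of_lt_of_le (by positivity) hm2p
    rw [div_le_div_iff₀ (by positivity) (by norm_num)]
    -- need 29.67 m ≤ m + t², i.e. 28.67 m ≤ t²
    have hmc : m / (2 * (1 + ε)) ≤ t := by
      -- t = m - thresh ≥ m - (1+δ)m/2 = m(1-δ)/2 = m/(2(1+ε))
      have h1 : thresh ε ≤ (1 + ε / (1 + ε)) * (m / 2) := by
        rw [hthresh]
        have : pivot ε ≤ m / 2 := by linarith
        nlinarith
      have h2 : (1:ℝ) - ε / (1 + ε) = 1 / (1 + ε) := by field_simp; ring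
      have : m - (1 + ε / (1 + ε)) * (m / 2) = (1 - ε / (1 + ε)) * (m / 2) := by ring
      rw [htdef]
      have h3 : m / (2 * (1 + ε)) = (1 - ε / (1 + ε)) * (m / 2) := by
        rw [h2]; field_simp
      linarith [h3]
    have ht2 : (m / (2 * (1 + ε))) ^ 2 ≤ t ^ 2 := by
      have h0 : 0 ≤ m / (2 * (1 + ε)) := by positivity
      nlinarith
    -- m ≥ 2 pivot = 19.68 (1+ε)²/ε²
    have hmlb : 19.68 * (1 + ε) ^ 2 / ε ^ 2 ≤ m := by
      have hpe : 2 * pivot ε = 19.68 * (1 + ε) ^ 2 / ε ^ 2 := by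
        unfold pivot
        field_simp
        ring
      rw [hpe] at hm2p
      exact hm2p
    -- so m / (4(1+ε)²) ≥ 19.68/(4 ε²) ≥ 28.67, hence t² ≥ m²/(4(1+ε)²) ≥ 28.67 m
    have hkey : 28.67 * m ≤ t ^ 2 := by
      have h4 : (0:ℝ) < 4 * (1 + ε) ^ 2 := by positivity
      have hA : 28.67 * m ≤ m ^ 2 / (4 * (1 + ε) ^ 2) := by
        rw [le_div_iff₀ h4]
        have hε2' : ε ^ 2 * 114.68 ≤ 19.68 := by linarith
        have hε0 : (0:ℝ) < ε ^ 2 := by positivity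
        -- m ≥ 19.68 (1+ε)²/ε²  ⇒ m ε² ≥ 19.68 (1+ε)²
        have hmb : 19.68 * (1 + ε) ^ 2 ≤ m * ε ^ 2 := by
          rw [div_le_iff₀ hε0] at hmlb
          linarith
        have hmbig : 114.68 * (1 + ε) ^ 2 ≤ m := by
          nlinarith [hmb, mul_le_mul_of_nonneg_left hε2' hm0.le]
        nlinarith [mul_le_mul_of_nonneg_left hmbig hm0.le]
      have hB : m ^ 2 / (4 * (1 + ε) ^ 2) = (m / (2 * (1 + ε))) ^ 2 := by
        field_simp; ring
      rw [hB] at hA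
      linarith [hA, ht2]
    linarith [hkey]
  calc (μ {ω | Z ω < thresh ε}).toReal ≤ (μ {ω | Z ω ≤ m - t}).toReal := hmono
    _ ≤ v / (v + t ^ 2) := hcant
    _ ≤ m / (m + t ^ 2) := hstep
    _ ≤ 1 / 29.67 := hfin
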